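/- In the notation of the reflection lemma: at α₁ = 0 and U_r = U₋, the reflection coefficient equals K_{b₁} = −k₁(λ₁(U₋) − v₋/u₋) / (k₃(λ₃(U₋) − v₋/u₋)), and this quantity is strictly positive. -/

import Mathlib

theorem reflection_coefficient_positive (γ u v p ρ c : ℝ)
    (hγ : 1 < γ) (hp : 0 < p) (hρ : 0 < ρ)
    (hc : c = Real.sqrt (γ * p / ρ)) (hc0 : 0 < c) (hsup : c < u) :
    0 < -(2 * Real.sqrt ((u ^ 2 + v ^ 2) - c ^ 2) *
          (Real.cos (Real.arctan (v / u) -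
            Real.arctan (c / Real.sqrt ((u ^ 2 + v ^ 2) - c ^ 2)))) ^ 3 / (γ + 1) *
          ((u * v - c * Real.sqrt ((u ^ 2 + v ^ 2) - c ^ 2)) / (u ^ 2 - c ^ 2)
            - v / u)) /
        (2 * Real.sqrt ((u ^ 2 + v ^ 2) - c ^ 2) *
          (Real.cos (Real.arctan (v / u) +
            Real.arctan (c / Real.sqrt ((u ^ 2 + v ^ 2) - c ^ 2)))) ^ 3 / (γ + 1) *
          ((u * v + c * Real.sqrt ((u ^ 2 + v ^ 2) - c ^ 2)) / (u ^ 2 - c ^ 2)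
            - v / u)) := by
  have hu : 0 < u := lt_trans hc0 hsup
  have huc : 0 < u ^ 2 - c ^ 2 := by nlinarith
  have hq : 0 < (u ^ 2 + v ^ 2) - c ^ 2 := by nlinarith
  set s := Real.sqrt ((u ^ 2 + v ^ 2) - c ^ 2) with hsdef
  have hs : 0 < s := Real.sqrt_pos.mpr hq
  have hs2 : s ^ 2 = (u ^ 2 + v ^ 2) - c ^ 2 := Real.sq_sqrt hq.le
  have hkey : (v * c) ^ 2 < (u * s) ^ 2 := by nlinarith
  have hus : 0 < u * s := mul_pos hu hs
  have h1 : 0 < u * s - v * c := by nlinarith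
  have h2 : 0 < u * s + v * c := by nlinarith
  have hvu : 0 < 1 + (v / u) * (c / s) := by
    have : 1 + (v / u) * (c / s) = (u * s + v * c) / (u * s) := by
      field_simp
    rw [this]; exact div_pos h2 hus
  have hvu' : 0 < 1 - (v / u) * (c / s) := by
    have : 1 - (v / u) * (c / s) = (u * s - v * c) / (u * s) := by
      field_simp
    rw [this]; exact div_pos h1 hus
  have hP : ∀ x : ℝ, (0:ℝ) < Real.sqrt (1 + x ^ 2) := fun x =>
    Real.sqrt_pos.mpr (by positivity)
  have hcosA : 0 < Real.cos (Real.arctan (v / u) -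
      Real.arctan (c / s)) := by
    rw [Real.cos_sub, Real.cos_arctan, Real.cos_arctan, Real.sin_arctan,
      Real.sin_arctan]
    have := hP (v / u); have := hP (c / s)
    rw [div_mul_div_comm, div_mul_div_comm, ← add_div]
    exact div_pos (by nlinarith) (by positivity)
  have hcosB : 0 < Real.cos (Real.arctan (v / u) +
      Real.arctan (c / s)) := by
    rw [Real.cos_add, Real.cos_arctan, Real.cos_arctan, Real.sin_arctan,
      Real.sin_arctan]
    have := hP (v / u); have := hP (c / s)
    rw [div_mul_div_comm, div_mul_div_comm, div_sub_div_same]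
    exact div_pos (by nlinarith) (by positivity)
  have hL1 : (u * v - c * s) / (u ^ 2 - c ^ 2) - v / u < 0 := by
    have : (u * v - c * s) / (u ^ 2 - c ^ 2) - v / u
        = -(c * (u * s - v * c)) / (u * (u ^ 2 - c ^ 2)) := by
      field_simp; ring
    rw [this]
    apply div_neg_of_neg_of_pos
    · nlinarith
    · positivity
  have hL3 : 0 < (u * v + c * s) / (u ^ 2 - c ^ 2) - v / u := by
    have : (u * v + c * s) / (u ^ 2 - c ^ 2) - v / u
        = c * (u * s + v * c) / (u * (u ^ 2 - c ^ 2)) := by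
      field_simp; ring
    rw [this]
    positivity
  have hγ1 : 0 < γ + 1 := by linarith
  apply div_pos
  · have hk1 : 0 < 2 * s * (Real.cos (Real.arctan (v / u) - Real.arctan (c / s))) ^ 3 / (γ + 1) := by
      positivity
    exact neg_pos.mpr (mul_neg_of_pos_of_neg hk1 hL1)
  · have hk3 : 0 < 2 * s * (Real.cos (Real.arctan (v / u) + Real.arctan (c / s))) ^ 3 / (γ + 1) := by
      positivity
    exact mul_pos hk3 hL3
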